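/- Let a < b be positive integers with b ≠ 2a, and let X = {a, b, a+b}. Then for every k ∈ ℕ, the Grundy value k is attained at exactly three pile sizes, and if n is the smallest pile with G(n) = k, then either G(n+a) = G(n+a+b) = k, or else G(n+b) = G(n+a+b) = k. -/

import Mathlib

/-- The minimum excludant of a set of naturals. -/
noncomputable def mex (S : Set ℕ) : ℕ := sInf {m | m ∉ S}

/-- `G` is the Grundy (nim) sequence of the all-but subtraction game with
excluded set `X`: `G n = mex { G (n - t) : t > 0, t ∉ X, t ≤ n }`. -/
def IsGrundy (X : Set ℕ) (G : ℕ → ℕ) : Prop :=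
  ∀ n, G n = mex {m | ∃ t, 0 < t ∧ t ∉ X ∧ t ≤ n ∧ G (n - t) = m}

open scoped Classical in
noncomputable def tri (a b : ℕ) : ℕ → ℕ × ℕ
  | k =>
    let T := fun j (_ : j < k) => tri a b j
    let n := sInf {i | ∀ j, ∀ hj : j < k, i ∉ ({(T j hj).1, (T j hj).1 + (T j hj).2, (T j hj).1 + a + b} : Set ℕ)}
    if ∃ j, ∃ hj : j < k, n + a ∈ ({(T j hj).1, (T j hj).1 + (T j hj).2, (T j hj).1 + a + b} : Set ℕ)
    then (n, b) else (n, a)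
  termination_by k => k

noncomputable def nn (a b k : ℕ) : ℕ := (tri a b k).1
noncomputable def xx (a b k : ℕ) : ℕ := (tri a b k).2
def Ta (a b k : ℕ) : Set ℕ := {nn a b k, nn a b k + xx a b k, nn a b k + a + b}
def fresh (a b k : ℕ) : Set ℕ := {i | ∀ j, j < k → i ∉ Ta a b j}

open scoped Classical in
lemma tri_eq (a b k : ℕ) : tri a b k =
    if ∃ j, ∃ _ : j < k, sInf (fresh a b k) + a ∈ Ta a b j
    then (sInf (fresh a b k), b) else (sInf (fresh a b k), a) := by
  rw [tri.eq_1]; exact ite_congr rfl (fun _ => rfl) (fun _ => rfl)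

lemma nn_eq (a b k : ℕ) : nn a b k = sInf (fresh a b k) := by
  unfold nn; rw [tri_eq]; split <;> rfl

open scoped Classical in
lemma xx_eq (a b k : ℕ) :
    xx a b k = if ∃ j, ∃ _ : j < k, nn a b k + a ∈ Ta a b j then b else a := by
  unfold xx; rw [tri_eq, ← nn_eq]; split <;> rfl

lemma xx_ab (a b k : ℕ) : xx a b k = a ∨ xx a b k = b := by
  rw [xx_eq]; split
  · right; rfl
  · left; rfl

lemma mem_Ta (a b k i : ℕ) :
    i ∈ Ta a b k ↔ i = nn a b k ∨ i = nn a b k + xx a b k ∨ i = nn a b k + a + b := by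
  simp [Ta]

lemma nn_mem_Ta (a b k : ℕ) : nn a b k ∈ Ta a b k := by simp [Ta]

lemma Ta_le (a b k i : ℕ) (h : i ∈ Ta a b k) (hab : a < b) : i ≤ nn a b k + a + b := by
  rcases (mem_Ta a b k i).1 h with h | h | h <;>
    rcases xx_ab a b k with hx | hx <;> omega

lemma fresh_nonempty (a b k : ℕ) (hab : a < b) : (fresh a b k).Nonempty := by
  refine ⟨((Finset.range k).sup fun j => nn a b j + a + b) + 1, fun j hj hmem => ?_⟩
  have h1 := Ta_le a b j _ hmem hab
  have h2 : nn a b j + a + b ≤ (Finset.range k).sup fun j => nn a b j + a + b :=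
    Finset.le_sup (f := fun j => nn a b j + a + b) (Finset.mem_range.2 hj)
  omega

lemma nn_fresh (a b k : ℕ) (hab : a < b) : ∀ j < k, nn a b k ∉ Ta a b j := by
  have := Nat.sInf_mem (fresh_nonempty a b k hab)
  rw [← nn_eq] at this
  exact this

lemma nn_le_of_fresh (a b k i : ℕ) (h : ∀ j < k, i ∉ Ta a b j) : nn a b k ≤ i := by
  rw [nn_eq]; exact Nat.sInf_le h

lemma nn_mono (a b : ℕ) (hab : a < b) {j k : ℕ} (hjk : j < k) : nn a b j < nn a b k := by
  have hle : nn a b j ≤ nn a b k := by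
    refine nn_le_of_fresh a b j _ (fun i hij => ?_)
    exact nn_fresh a b k hab i (hij.trans hjk)
  have hne : nn a b k ∉ Ta a b j := nn_fresh a b k hab j hjk
  rcases Nat.lt_or_ge (nn a b j) (nn a b k) with h | h
  · exact h
  · exact absurd (by have : nn a b j = nn a b k := le_antisymm hle h; rw [← this]; exact nn_mem_Ta a b j) hne

lemma covered (a b k i : ℕ) (h : i < nn a b k) : ∃ j, j < k ∧ i ∈ Ta a b j := by
  by_contra hc
  push_neg at hc
  have := nn_le_of_fresh a b k i (fun j hj => hc j hj)
  omega

lemma xx_b_cond (a b k : ℕ) (hab : a < b) (h : xx a b k = b) :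
    ∃ j, j < k ∧ nn a b k + a ∈ Ta a b j := by
  rw [xx_eq] at h
  by_cases hc : ∃ j, ∃ _ : j < k, nn a b k + a ∈ Ta a b j
  · obtain ⟨j, hj, hm⟩ := hc; exact ⟨j, hj, hm⟩
  · rw [if_neg hc] at h; omega

lemma xx_a_cond (a b k : ℕ) (hab : a < b) (h : xx a b k = a) :
    ∀ j < k, nn a b k + a ∉ Ta a b j := by
  rw [xx_eq] at h
  by_cases hc : ∃ j, ∃ _ : j < k, nn a b k + a ∈ Ta a b j
  · rw [if_pos hc] at h; omega
  · intro j hj hm; exact hc ⟨j, hj, hm⟩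

lemma pred_a (a b : ℕ) (hab : a < b) {j k : ℕ} (hjk : j < k)
    (h : nn a b j + a = nn a b k) : False := by
  rcases xx_ab a b j with hx | hx
  · have : nn a b j + a ∈ Ta a b j := by rw [mem_Ta]; right; left; omega
    rw [h] at this
    exact nn_fresh a b k hab j hjk this
  · obtain ⟨i, hi, hm⟩ := xx_b_cond a b j hab hx
    rw [h] at hm
    exact nn_fresh a b k hab i (hi.trans hjk) hm

lemma second_fresh (a b k : ℕ) (hab : a < b) :
    ∀ j < k, nn a b k + xx a b k ∉ Ta a b j := by
  intro j hj hm
  rcases xx_ab a b k with hx | hx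
  · rw [hx] at hm; exact xx_a_cond a b k hab hx j hj hm
  · rw [hx] at hm
    have hjk := nn_mono a b hab hj
    rcases (mem_Ta a b j _).1 hm with h | h | h
    · omega
    · rcases xx_ab a b j with hxj | hxj <;> omega
    · exact pred_a a b hab hj (by omega)

lemma third_fresh (a b k : ℕ) (hab : a < b) :
    ∀ j < k, nn a b k + a + b ∉ Ta a b j := by
  intro j hj hm
  have h1 := Ta_le a b j _ hm hab
  have := nn_mono a b hab hj
  omega

lemma Ta_fresh (a b k : ℕ) (hab : a < b) (i : ℕ) (hi : i ∈ Ta a b k) :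
    ∀ j < k, i ∉ Ta a b j := by
  rcases (mem_Ta a b k i).1 hi with h | h | h <;> subst h
  · exact nn_fresh a b k hab
  · exact second_fresh a b k hab
  · exact third_fresh a b k hab

lemma Ta_unique (a b : ℕ) (hab : a < b) {j k i : ℕ} (hj : i ∈ Ta a b j) (hk : i ∈ Ta a b k) :
    j = k := by
  rcases Nat.lt_trichotomy j k with h | h | h
  · exact absurd hj (Ta_fresh a b k hab i hk j h)
  · exact h
  · exact absurd hk (Ta_fresh a b j hab i hj k h)

lemma nn_ge (a b : ℕ) (hab : a < b) (k : ℕ) : k ≤ nn a b k := by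
  induction k with
  | zero => omega
  | succ n ih =>
    have h2 : nn a b n < nn a b (n + 1) := nn_mono a b hab (by omega)
    omega

lemma total (a b : ℕ) (hab : a < b) (m : ℕ) : ∃ k, m ∈ Ta a b k := by
  have h : m < nn a b (m + 1) := by have := nn_ge a b hab (m + 1); omega
  obtain ⟨j, _, hm⟩ := covered a b (m + 1) m h
  exact ⟨j, hm⟩

lemma diff_mem (a b k : ℕ) (ha : 0 < a) (hab : a < b) {i m : ℕ}
    (hik : i ∈ Ta a b k) (hmk : m ∈ Ta a b k) (him : i < m) :
    i + a = m ∨ i + b = m ∨ i + (a + b) = m := by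
  rcases (mem_Ta a b k i).1 hik with h1 | h1 | h1 <;>
    rcases (mem_Ta a b k m).1 hmk with h2 | h2 | h2 <;>
    rcases xx_ab a b k with hx | hx <;> omega

lemma witness (a b : ℕ) (ha : 0 < a) (hab : a < b) (hb : b ≠ 2 * a) {v k m : ℕ}
    (hvk : v < k) (hm : m ∈ Ta a b k) :
    ∃ j ∈ Ta a b v, j < m ∧ ¬(j + a = m ∨ j + b = m ∨ j + (a + b) = m) := by
  by_contra hcon
  push_neg at hcon
  have hnvn : nn a b v < nn a b k := nn_mono a b hab hvk
  rcases (mem_Ta a b k m).1 hm with hm1 | hm1 | hm1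
  · -- m = nn k
    have h0 := hcon _ (nn_mem_Ta a b v) (by omega)
    rcases h0 with h | h | h
    · exact pred_a a b hab hvk (by omega)
    · rcases xx_ab a b v with hx | hx
      · have hj2 : nn a b v + a ∈ Ta a b v := by rw [mem_Ta]; right; left; omega
        have := hcon _ hj2 (by omega)
        omega
      · have hmem : nn a b v + b ∈ Ta a b v := by rw [mem_Ta]; right; left; omega
        rw [(by omega : nn a b v + b = m)] at hmem
        have := Ta_unique a b hab hmem hm
        omega
    · have hmem : nn a b v + a + b ∈ Ta a b v := by rw [mem_Ta]; right; right; rfl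
      rw [(by omega : nn a b v + a + b = m)] at hmem
      have := Ta_unique a b hab hmem hm
      omega
  · -- m = nn k + xx k
    rcases xx_ab a b k with hxk | hxk
    · rw [hxk] at hm1
      have h0 := hcon _ (nn_mem_Ta a b v) (by omega)
      rcases h0 with h | h | h
      · omega
      · rcases xx_ab a b v with hx | hx
        · have hj2 : nn a b v + a ∈ Ta a b v := by rw [mem_Ta]; right; left; omega
          have := hcon _ hj2 (by omega)
          omega
        · have hmem : nn a b v + b ∈ Ta a b v := by rw [mem_Ta]; right; left; omega
          rw [(by omega : nn a b v + b = m)] at hmem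
          have := Ta_unique a b hab hmem hm
          omega
      · rcases xx_ab a b v with hx | hx
        · have hmem : nn a b v + a + b ∈ Ta a b v := by rw [mem_Ta]; right; right; rfl
          rw [(by omega : nn a b v + a + b = m)] at hmem
          have := Ta_unique a b hab hmem hm
          omega
        · have hmem : nn a b v + b ∈ Ta a b v := by rw [mem_Ta]; right; left; omega
          rw [(by omega : nn a b v + b = nn a b k)] at hmem
          exact nn_fresh a b k hab v hvk hmem
    · rw [hxk] at hm1
      have h0 := hcon _ (nn_mem_Ta a b v) (by omega)
      rcases h0 with h | h | h
      · omega
      · omega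
      · exact pred_a a b hab hvk (by omega)
  · -- m = nn k + a + b
    have h0 := hcon _ (nn_mem_Ta a b v) (by omega)
    omega

lemma mex_eq_of {S : Set ℕ} {k : ℕ} (h1 : ∀ v < k, v ∈ S) (h2 : k ∉ S) : mex S = k := by
  unfold mex
  refine le_antisymm (Nat.sInf_le h2) (le_csInf ⟨k, h2⟩ fun m hm => ?_)
  by_contra hlt
  push_neg at hlt
  exact hm (h1 m hlt)

lemma grundy_eq (a b : ℕ) (ha : 0 < a) (hab : a < b) (hb : b ≠ 2 * a)
    (G : ℕ → ℕ) (hG : IsGrundy {a, b, a + b} G) :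
    ∀ m k, m ∈ Ta a b k → G m = k := by
  intro m
  induction m using Nat.strong_induction_on with
  | _ m IH =>
    intro k hmk
    rw [hG m]
    apply mex_eq_of
    · intro v hvk
      obtain ⟨j, hjv, hjm, hnot⟩ := witness a b ha hab hb hvk hmk
      refine ⟨m - j, by omega, ?_, by omega, ?_⟩
      · intro hX
        simp only [Set.mem_insert_iff, Set.mem_singleton_iff] at hX
        omega
      · have heq : m - (m - j) = j := by omega
        rw [heq]
        exact IH j hjm v hjv
    · rintro ⟨t, ht0, htX, htm, hGt⟩
      have hjm : m - t < m := by omega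
      obtain ⟨k', hk'⟩ := total a b hab (m - t)
      have hIH := IH (m - t) hjm k' hk'
      have hkk : k' = k := by omega
      subst hkk
      have hd := diff_mem a b k' ha hab hk' hmk hjm
      apply htX
      simp only [Set.mem_insert_iff, Set.mem_singleton_iff]
      omega

theorem stmt_2 (a b : ℕ) (ha : 0 < a) (hab : a < b) (hb : b ≠ 2 * a)
    (G : ℕ → ℕ) (hG : IsGrundy {a, b, a + b} G) (k : ℕ) :
    {i | G i = k}.ncard = 3 ∧
    (G (sInf {i | G i = k} + a) = k ∧ G (sInf {i | G i = k} + a + b) = k ∨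
     G (sInf {i | G i = k} + b) = k ∧ G (sInf {i | G i = k} + a + b) = k) := by
  have hmain := grundy_eq a b ha hab hb G hG
  have hocc : {i | G i = k} = Ta a b k := by
    ext i
    simp only [Set.mem_setOf_eq]
    constructor
    · intro hGi
      obtain ⟨k', hk'⟩ := total a b hab i
      have h1 := hmain i k' hk'
      have h2 : k' = k := by omega
      subst h2; exact hk'
    · intro hi; exact hmain i k hi
  have hxlt : xx a b k < a + b := by rcases xx_ab a b k with h | h <;> omega
  have hxpos : 0 < xx a b k := by rcases xx_ab a b k with h | h <;> omega
  have hsinf : sInf {i | G i = k} = nn a b k := by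
    rw [hocc]
    refine le_antisymm (Nat.sInf_le (nn_mem_Ta a b k))
      (le_csInf ⟨_, nn_mem_Ta a b k⟩ fun i hi => ?_)
    rcases (mem_Ta a b k i).1 hi with h | h | h <;> omega
  constructor
  · rw [hocc, Set.ncard_eq_three]
    exact ⟨nn a b k, nn a b k + xx a b k, nn a b k + a + b, by omega, by omega, by omega, rfl⟩
  · rw [hsinf]
    rcases xx_ab a b k with hx | hx
    · left
      constructor
      · apply hmain; rw [mem_Ta]; right; left; omega
      · apply hmain; rw [mem_Ta]; right; right; rfl
    · right
      constructor
      · apply hmain; rw [mem_Ta]; right; left; omega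
      · apply hmain; rw [mem_Ta]; right; right; rfl
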